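/- Let X be a Lévy process with X_t = μt + σW_t + S_t where W is a Brownian motion and S an independent pure-jump Lévy process. Given the equidistant grid t_k = k·h_n on [0, T_n] with T_n = n·h_n and a permutation i^n of {1,...,n}, define the quasi-process X̂^n_t = u + ∑_{k=1}^n Δ_{i^n(k)}X · 1_{[t_k,∞)}(t). If h_n → 0 and n·h_n → ∞, then for every fixed s < t, X̂^n_t − X̂^n_s converges in distribution to X_t − X_s. -/

import Mathlib

open MeasureTheory ProbabilityTheory Filter

section Aux

variable {Ω : Type*} [MeasurableSpace Ω] {P : Measure Ω} [IsProbabilityMeasure P]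

lemma identDistrib_of_ae_eq' {f g : Ω → ℝ} (hg : AEMeasurable g P) (h : f =ᵐ[P] g) :
    IdentDistrib f g P P :=
  ⟨hg.congr h.symm, hg, Measure.map_congr h⟩

lemma aux_add {f g f' g' : Ω → ℝ} (hf : Measurable f) (hg : Measurable g)
    (hf' : Measurable f') (hg' : Measurable g')
    (hfg : IndepFun f g P) (hfg' : IndepFun f' g' P)
    (h1 : IdentDistrib f f' P P) (h2 : IdentDistrib g g' P P) :
    IdentDistrib (fun ω => f ω + g ω) (fun ω => f' ω + g' ω) P P := by
  have e1 : P.map (fun ω => (f ω, g ω)) = (P.map f).prod (P.map g) :=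
    (indepFun_iff_map_prod_eq_prod_map_map hf.aemeasurable hg.aemeasurable).mp hfg
  have e2 : P.map (fun ω => (f' ω, g' ω)) = (P.map f').prod (P.map g') :=
    (indepFun_iff_map_prod_eq_prod_map_map hf'.aemeasurable hg'.aemeasurable).mp hfg'
  refine ⟨(hf.add hg).aemeasurable, (hf'.add hg').aemeasurable, ?_⟩
  have key1 : (fun ω => f ω + g ω) = (fun p : ℝ × ℝ => p.1 + p.2) ∘ (fun ω => (f ω, g ω)) := rfl
  have key2 : (fun ω => f' ω + g' ω) = (fun p : ℝ × ℝ => p.1 + p.2) ∘ (fun ω => (f' ω, g' ω)) :=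
    rfl
  rw [key1, key2, ← Measure.map_map measurable_add (hf.prodMk hg),
    ← Measure.map_map measurable_add (hf'.prodMk hg'), e1, e2, h1.map_eq, h2.map_eq]

end Aux

/-- For a Lévy process `X` (stationary independent increments, `X_0 = 0`, stochastically
continuous), equidistant grids `t_k = k·h_n` with `h_n → 0` and `n·h_n → ∞`, permutations
`i^n`, and the quasi-process `X̂^n_t = u + ∑_{k=1}^n Δ_{i^n(k)}X · 1_{[t_k,∞)}(t)`: for any
fixed `0 ≤ s < t`, the increment `X̂^n_t - X̂^n_s` converges in distribution to `X_t - X_s`. -/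
theorem stmt_15 {Ω : Type*} [MeasurableSpace Ω] (P : Measure Ω) [IsProbabilityMeasure P]
    (X : ℝ → Ω → ℝ)
    (hmeas : ∀ t, Measurable (X t))
    (hzero : ∀ᵐ ω ∂P, X 0 ω = 0)
    (hindep : ∀ (m : ℕ) (τ : ℕ → ℝ), Monotone τ →
      iIndepFun
        (fun i : Fin m => fun ω => X (τ ((i : ℕ) + 1)) ω - X (τ (i : ℕ)) ω) P)
    (hstat : ∀ s t : ℝ, 0 ≤ s → s ≤ t →
      IdentDistrib (fun ω => X t ω - X s ω) (X (t - s)) P P)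
    (hcont : ∀ (t : ℝ) (a : ℕ → ℝ), Tendsto a atTop (nhds t) →
      TendstoInMeasure P (fun n => X (a n)) atTop (X t))
    (hn : ℕ → ℝ) (hnpos : ∀ n, 0 < hn n)
    (hn0 : Tendsto hn atTop (nhds 0))
    (hnT : Tendsto (fun n : ℕ => (n : ℝ) * hn n) atTop atTop)
    (σ : ∀ n : ℕ, Equiv.Perm (Fin n)) (u s t : ℝ) (hs : 0 ≤ s) (hst : s < t) :
    ∀ g : BoundedContinuousFunction ℝ ℝ,
      Tendsto
        (fun n => ∫ ω, g
          ((u + ∑ k : Fin n, (if ((k : ℕ) + 1) * hn n ≤ t then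
              X ((((σ n k : Fin n) : ℕ) + 1) * hn n) ω - X (((σ n k : Fin n) : ℕ) * hn n) ω
            else 0))
          - (u + ∑ k : Fin n, (if ((k : ℕ) + 1) * hn n ≤ s then
              X ((((σ n k : Fin n) : ℕ) + 1) * hn n) ω - X (((σ n k : Fin n) : ℕ) * hn n) ω
            else 0))) ∂P)
        atTop (nhds (∫ ω, g (X t ω - X s ω) ∂P)) := by
  classical
  intro g
  -- Increment family on the grid with mesh h
  set Δ : ∀ n : ℕ, Fin n → Ω → ℝ :=
    fun n i ω => X ((((i : ℕ) : ℝ) + 1) * hn n) ω - X (((i : ℕ) : ℝ) * hn n) ω with hΔ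
  -- Key exchangeability lemma: the sum over any B ⊆ Fin n of the increments
  -- is distributed as X (card B * h).
  have key : ∀ (n : ℕ) (B : Finset (Fin n)),
      IdentDistrib (fun ω => ∑ j ∈ B, Δ n j ω) (X ((B.card : ℝ) * hn n)) P P := by
    intro n B
    induction B using Finset.induction_on with
    | empty =>
      simp only [Finset.sum_empty, Finset.card_empty, Nat.cast_zero, zero_mul]
      exact identDistrib_of_ae_eq' (hmeas 0).aemeasurable
        (hzero.mono fun ω hω => hω.symm)
    | @insert a B ha IH =>
      have hpos := hnpos n
      have hτmono : Monotone (fun k : ℕ => (k : ℝ) * hn n) := fun i j hij => by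
        exact mul_le_mul_of_nonneg_right (Nat.cast_le.mpr hij) hpos.le
      have hfam : iIndepFun (Δ n) P := by
        have := hindep n (fun k : ℕ => (k : ℝ) * hn n) hτmono
        convert this using 2 with i
        funext ω
        push_cast
        rfl
      have hmeasΔ : ∀ i, Measurable (Δ n i) := fun i => (hmeas _).sub (hmeas _)
      set m := B.card with hm
      set Y₁ : Ω → ℝ := fun ω => X (hn n) ω - X 0 ω with hY₁
      set Y₂ : Ω → ℝ := fun ω => X (((m : ℝ) + 1) * hn n) ω - X (hn n) ω with hY₂
      -- identical distributions
      have haΔ : IdentDistrib (Δ n a) Y₁ P P := by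
        have e1 : IdentDistrib (Δ n a) (X (hn n)) P P := by
          have hle1 : (0:ℝ) ≤ ((a : ℕ) : ℝ) * hn n := by positivity
          have hle2 : ((a : ℕ) : ℝ) * hn n ≤ (((a : ℕ) : ℝ) + 1) * hn n := by nlinarith
          have := hstat (((a : ℕ) : ℝ) * hn n) ((((a : ℕ) : ℝ) + 1) * hn n) hle1 hle2
          have harith : (((a : ℕ) : ℝ) + 1) * hn n - ((a : ℕ) : ℝ) * hn n = hn n := by ring
          rwa [harith] at this
        have e2 : IdentDistrib Y₁ (X (hn n)) P P := by
          have := hstat 0 (hn n) le_rfl hpos.le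
          rwa [sub_zero] at this
        exact e1.trans e2.symm
      have hBΔ : IdentDistrib (fun ω => ∑ j ∈ B, Δ n j ω) Y₂ P P := by
        have e2 : IdentDistrib Y₂ (X ((m : ℝ) * hn n)) P P := by
          have hmn : (0:ℝ) ≤ (m : ℝ) := Nat.cast_nonneg m
          have hle2 : hn n ≤ ((m : ℝ) + 1) * hn n := by nlinarith
          have := hstat (hn n) (((m : ℝ) + 1) * hn n) hpos.le hle2
          have harith : ((m : ℝ) + 1) * hn n - hn n = (m : ℝ) * hn n := by ring
          rwa [harith] at this
        exact IH.trans e2.symm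
      -- independence
      have ind1 : IndepFun (Δ n a) (fun ω => ∑ j ∈ B, Δ n j ω) P := by
        have := (hfam.indepFun_finset_sum_of_notMem hmeasΔ ha).symm
        have hsum : (∑ j ∈ B, Δ n j) = fun ω => ∑ j ∈ B, Δ n j ω := by
          funext ω; simp [Finset.sum_apply]
        rwa [hsum] at this
      have ind2 : IndepFun Y₁ Y₂ P := by
        set τ' : ℕ → ℝ := fun k =>
          if k = 0 then 0 else if k = 1 then hn n else ((m : ℝ) + 1) * hn n with hτ'
        have hτ'mono : Monotone τ' := by
          have hmn : (0:ℝ) ≤ (m : ℝ) := Nat.cast_nonneg m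
          have h0 : (0:ℝ) ≤ hn n := hpos.le
          intro i j hij
          rcases i with _ | _ | i <;> rcases j with _ | _ | j <;>
            simp only [hτ'] <;> norm_num <;>
            first
              | nlinarith
              | exact absurd hij (by omega)
        have hind2 := (hindep 2 τ' hτ'mono).indepFun
          (show (0 : Fin 2) ≠ 1 by decide)
        simp only [Fin.val_zero, Fin.val_one] at hind2
        have hv0 : τ' 0 = 0 := by simp [τ']
        have hv1 : τ' 1 = hn n := by simp [τ']
        have hv2 : τ' 2 = ((m : ℝ) + 1) * hn n := by simp [τ']
        rw [show (0:ℕ) + 1 = 1 from rfl, show (1:ℕ) + 1 = 2 from rfl, hv0, hv1, hv2] at hind2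
        exact hind2
      have hadd := aux_add (hmeasΔ a) (by
          exact Finset.measurable_sum B fun j _ => hmeasΔ j)
        ((hmeas _).sub (hmeas _)) ((hmeas _).sub (hmeas _)) ind1 ind2 haΔ hBΔ
      have hfin : IdentDistrib (fun ω => Y₁ ω + Y₂ ω)
          (X ((((insert a B).card : ℕ) : ℝ) * hn n)) P P := by
        have hcard : ((insert a B).card : ℝ) = (m : ℝ) + 1 := by
          rw [Finset.card_insert_of_notMem ha]; push_cast [hm]; ring
        rw [hcard]
        refine identDistrib_of_ae_eq' (hmeas _).aemeasurable ?_
        filter_upwards [hzero] with ω hω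
        simp only [hY₁, hY₂, hω]
        ring
      have hsum_insert : (fun ω => ∑ j ∈ insert a B, Δ n j ω)
          = fun ω => Δ n a ω + ∑ j ∈ B, Δ n j ω := by
        funext ω; rw [Finset.sum_insert ha]
      rw [hsum_insert]
      exact hadd.trans hfin
  -- The relevant index set and its cardinality
  set A : ∀ n : ℕ, Finset (Fin n) :=
    fun n => Finset.univ.filter
      (fun k : Fin n => s < (((k : ℕ) : ℝ) + 1) * hn n ∧ (((k : ℕ) : ℝ) + 1) * hn n ≤ t)
    with hA
  set a : ℕ → ℝ := fun n => ((A n).card : ℝ) * hn n with ha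
  -- Step 1: rewrite the integrand
  have step1 : ∀ n : ℕ, (fun ω =>
        (u + ∑ k : Fin n, (if ((k : ℕ) + 1) * hn n ≤ t then
            X ((((σ n k : Fin n) : ℕ) + 1) * hn n) ω - X (((σ n k : Fin n) : ℕ) * hn n) ω
          else 0))
        - (u + ∑ k : Fin n, (if ((k : ℕ) + 1) * hn n ≤ s then
            X ((((σ n k : Fin n) : ℕ) + 1) * hn n) ω - X (((σ n k : Fin n) : ℕ) * hn n) ω
          else 0)))
      = fun ω => ∑ j ∈ (A n).image (σ n), Δ n j ω := by
    intro n
    funext ω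
    rw [add_sub_add_left_eq_sub, ← Finset.sum_sub_distrib,
      Finset.sum_image (fun x _ y _ hxy => (σ n).injective hxy)]
    rw [show (∑ j ∈ A n, Δ n (σ n j) ω) = ∑ k ∈ A n,
        (X ((((σ n k : Fin n) : ℕ) + 1) * hn n) ω - X (((σ n k : Fin n) : ℕ) * hn n) ω) from by
      refine Finset.sum_congr rfl fun k _ => ?_
      simp only [hΔ]]
    rw [hA, Finset.sum_filter]
    refine Finset.sum_congr rfl fun k _ => ?_
    by_cases h1 : (((k : ℕ) : ℝ) + 1) * hn n ≤ s
    · have h2 : (((k : ℕ) : ℝ) + 1) * hn n ≤ t := h1.trans hst.le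
      have hns : ¬ s < (((k : ℕ) : ℝ) + 1) * hn n := not_lt.mpr h1
      push_cast
      simp [h1, h2, hns]
    · have hslt : s < (((k : ℕ) : ℝ) + 1) * hn n := lt_of_not_ge h1
      push_cast
      by_cases h2 : (((k : ℕ) : ℝ) + 1) * hn n ≤ t
      · simp [h1, h2, hslt]
      · simp [h1, h2, hslt]
  -- Step 2: the integrals coincide with those of X (a n)
  have step2 : ∀ n : ℕ, (∫ ω, g
        ((u + ∑ k : Fin n, (if ((k : ℕ) + 1) * hn n ≤ t then
            X ((((σ n k : Fin n) : ℕ) + 1) * hn n) ω - X (((σ n k : Fin n) : ℕ) * hn n) ω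
          else 0))
        - (u + ∑ k : Fin n, (if ((k : ℕ) + 1) * hn n ≤ s then
            X ((((σ n k : Fin n) : ℕ) + 1) * hn n) ω - X (((σ n k : Fin n) : ℕ) * hn n) ω
          else 0))) ∂P)
      = ∫ ω, g (X (a n) ω) ∂P := by
    intro n
    have hident : IdentDistrib (fun ω => ∑ j ∈ (A n).image (σ n), Δ n j ω)
        (X (a n)) P P := by
      have := key n ((A n).image (σ n))
      rwa [Finset.card_image_of_injective _ (σ n).injective] at this
    have := (hident.comp g.continuous.measurable).integral_eq
    simp only [Function.comp_def] at this
    have hcong := congrArg (fun f : Ω → ℝ => ∫ ω, g (f ω) ∂P) (step1 n)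
    exact hcong.trans this
  -- Step 3: a n → t - s
  have step3 : Tendsto a atTop (nhds (t - s)) := by
    have ht0 : 0 ≤ t := hs.trans hst.le
    have hcard : ∀ᶠ n in atTop, (A n).card = ⌊t / hn n⌋₊ - ⌊s / hn n⌋₊ := by
      filter_upwards [hnT.eventually_gt_atTop t] with n hnt
      have hpos := hnpos n
      have hbn : ⌊t / hn n⌋₊ ≤ n := by
        have h1 : t / hn n < (n : ℝ) := (div_lt_iff₀ hpos).mpr (by linarith [hnt])
        have h2 : ⌊t / hn n⌋₊ ≤ ⌊((n : ℕ) : ℝ)⌋₊ := Nat.floor_le_floor h1.le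
        simpa using h2
      have hmem : ∀ k : Fin n, (k ∈ A n ↔ ⌊s / hn n⌋₊ ≤ (k : ℕ) ∧ (k : ℕ) < ⌊t / hn n⌋₊) := by
        intro k
        rw [hA, Finset.mem_filter]
        simp only [Finset.mem_univ, true_and]
        constructor
        · rintro ⟨h1, h2⟩
          constructor
          · have ha1 : s / hn n < ((k : ℕ) : ℝ) + 1 := by
              rw [div_lt_iff₀ hpos]; linarith [h1]
            have ha2 : s / hn n < (((k : ℕ) + 1 : ℕ) : ℝ) := by push_cast; linarith
            have ha3 : ⌊s / hn n⌋₊ < (k : ℕ) + 1 := (Nat.floor_lt (by positivity)).mpr ha2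
            omega
          · have : ((k : ℕ) : ℝ) + 1 ≤ t / hn n := by
              rw [le_div_iff₀ hpos]; linarith [h2]
            have h3 : (((k : ℕ) + 1 : ℕ) : ℝ) ≤ t / hn n := by push_cast; push_cast at this; linarith
            have := Nat.le_floor h3
            omega
        · rintro ⟨h1, h2⟩
          constructor
          · have h1' : ⌊s / hn n⌋₊ < (k : ℕ) + 1 := by omega
            have : s / hn n < (((k : ℕ) + 1 : ℕ) : ℝ) := (Nat.floor_lt (by positivity)).mp h1'
            rw [← div_lt_iff₀ hpos]
            push_cast at this ⊢
            linarith
          · have h2' : (k : ℕ) + 1 ≤ ⌊t / hn n⌋₊ := by omega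
            have : (((k : ℕ) + 1 : ℕ) : ℝ) ≤ t / hn n := by
              calc (((k : ℕ) + 1 : ℕ) : ℝ) ≤ (⌊t / hn n⌋₊ : ℝ) := by exact_mod_cast h2'
                _ ≤ t / hn n := Nat.floor_le (by positivity)
            rw [← le_div_iff₀ hpos]
            push_cast at this ⊢
            linarith
      have : (A n).map Fin.valEmbedding = Finset.Ico ⌊s / hn n⌋₊ ⌊t / hn n⌋₊ := by
        ext j
        simp only [Finset.mem_map, Fin.valEmbedding_apply, Finset.mem_Ico]
        constructor
        · rintro ⟨k, hk, rfl⟩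
          exact (hmem k).mp hk
        · rintro ⟨h1, h2⟩
          have hj : j < n := lt_of_lt_of_le h2 hbn
          exact ⟨⟨j, hj⟩, (hmem ⟨j, hj⟩).mpr ⟨h1, h2⟩, rfl⟩
      have := congrArg Finset.card this
      rwa [Finset.card_map, Nat.card_Ico] at this
    -- squeeze
    have hbound : ∀ᶠ n in atTop, |a n - (t - s)| ≤ hn n := by
      filter_upwards [hcard] with n hc
      have hpos := hnpos n
      have hfle : ⌊s / hn n⌋₊ ≤ ⌊t / hn n⌋₊ :=
        Nat.floor_le_floor (by gcongr <;> exact hst.le)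
      have hcast : (a n) = (⌊t / hn n⌋₊ : ℝ) * hn n - (⌊s / hn n⌋₊ : ℝ) * hn n := by
        have hc2 : ((A n).card : ℝ) = (⌊t / hn n⌋₊ : ℝ) - (⌊s / hn n⌋₊ : ℝ) := by
          rw [hc, Nat.cast_sub hfle]
        simp only [ha]
        rw [hc2]; ring
      have hts : ∀ r : ℝ, 0 ≤ r → r - hn n < (⌊r / hn n⌋₊ : ℝ) * hn n ∧
          (⌊r / hn n⌋₊ : ℝ) * hn n ≤ r := by
        intro r hr
        constructor
        · have : r / hn n < (⌊r / hn n⌋₊ : ℝ) + 1 := Nat.lt_floor_add_one _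
          have := (div_lt_iff₀ hpos).mp this
          nlinarith
        · have : (⌊r / hn n⌋₊ : ℝ) ≤ r / hn n := Nat.floor_le (by positivity)
          have := (le_div_iff₀ hpos).mp this
          linarith
      obtain ⟨hts1, hts2⟩ := hts t ht0
      obtain ⟨hss1, hss2⟩ := hts s hs
      rw [abs_le]
      refine ⟨by nlinarith, by nlinarith⟩
    have h1 : Tendsto (fun n => |a n - (t - s)|) atTop (nhds 0) := by
      refine squeeze_zero_norm' ?_ hn0
      filter_upwards [hbound] with n h
      simpa [Real.norm_eq_abs, abs_abs] using h
    exact tendsto_iff_norm_sub_tendsto_zero.mpr (by simpa [Real.norm_eq_abs] using h1)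
  -- Step 4: convergence in distribution along a n
  have step4 : Tendsto (fun n => ∫ ω, g (X (a n) ω) ∂P) atTop
      (nhds (∫ ω, g (X (t - s) ω) ∂P)) := by
    apply tendsto_of_subseq_tendsto
    intro ns hns
    have hmeasSub : TendstoInMeasure P (fun k => X (a (ns k))) atTop (X (t - s)) := by
      exact hcont (t - s) (fun k => a (ns k)) (step3.comp hns)
    obtain ⟨ms, -, hae⟩ := hmeasSub.exists_seq_tendsto_ae
    refine ⟨ms, ?_⟩
    apply tendsto_integral_of_dominated_convergence (fun _ => ‖g‖)
    · intro i
      exact (g.continuous.measurable.comp (hmeas _)).aestronglyMeasurable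
    · exact integrable_const _
    · intro i
      exact Filter.Eventually.of_forall fun ω => g.norm_coe_le_norm _
    · filter_upwards [hae] with ω hω
      exact (g.continuous.tendsto _).comp hω
  -- conclude
  have hfinal : (∫ ω, g (X (t - s) ω) ∂P) = ∫ ω, g (X t ω - X s ω) ∂P := by
    have := ((hstat s t hs hst.le).comp g.continuous.measurable).integral_eq
    simp only [Function.comp_def] at this
    exact this.symm
  rw [← hfinal]
  have := step4
  refine this.congr fun n => (step2 n).symm
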